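/- Let (G,Λ) be a pseudo free self-similar 1-graph with g·v = v for all g ∈ G, v ∈ Λ^0, let T be a maximal tail of Λ, let v₀ ∈ T be a vertex with v₀Λ^1T = {e₀} a single edge. Define the 1-graph E with vertices E^0 := T ⨿ {vₙ}_{n≥1} and edges E^1 := (Λ^1T \ {e₀}) ⨿ {eₙ}_{n≥1}, where r_E and s_E agree with r and s on Λ^1T \ {e₀}, r_E(eₙ) = v_{n−1} (with v₀ the given vertex) and s_E(eₙ) = vₙ; let G act on E fixing all new edges and vertices (g·eₙ = eₙ, g·vₙ = vₙ) and acting as before on Λ^1T \ {e₀}, with restriction g|_{eₙ} := g and g|_{vₙ} := g and the original restriction on Λ^1T \ {e₀}. Then g·e₀ = e₀ and g|_{e₀} fixes the data consistently, E is a row-finite source-free 1-graph, and (G,E) is a pseudo free self-similar 1-graph. -/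

import Mathlib

/-- A `k`-graph: a countable small category equipped with a degree functor
`d : Λ → ℕ^k` satisfying the unique factorization property.  Objects are
identified with their identity morphisms (the degree-zero paths);
`comp μ ν` is the composite `μν` (a junk value when `s μ ≠ r ν`). -/
structure KGraph (k : ℕ) where
  Path : Type
  countable : Countable Path
  r : Path → Path
  s : Path → Path
  d : Path → Fin k → ℕ
  comp : Path → Path → Path
  d_r : ∀ μ, d (r μ) = 0
  d_s : ∀ μ, d (s μ) = 0
  r_r : ∀ μ, r (r μ) = r μ
  s_r : ∀ μ, s (r μ) = r μ
  r_s : ∀ μ, r (s μ) = s μ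
  s_s : ∀ μ, s (s μ) = s μ
  eq_r_of_d_eq_zero : ∀ μ, d μ = 0 → μ = r μ
  comp_id : ∀ μ, comp μ (s μ) = μ
  id_comp : ∀ μ, comp (r μ) μ = μ
  r_comp : ∀ μ ν, s μ = r ν → r (comp μ ν) = r μ
  s_comp : ∀ μ ν, s μ = r ν → s (comp μ ν) = s ν
  d_comp : ∀ μ ν, s μ = r ν → d (comp μ ν) = d μ + d ν
  comp_assoc : ∀ μ ν ξ, s μ = r ν → s ν = r ξ →
    comp (comp μ ν) ξ = comp μ (comp ν ξ)
  factor : ∀ μ p q, d μ = p + q →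
    ∃! αβ : Path × Path, s αβ.1 = r αβ.2 ∧ d αβ.1 = p ∧ d αβ.2 = q ∧
      comp αβ.1 αβ.2 = μ

namespace KGraph

variable {k : ℕ} (Λ : KGraph k)

/-- The vertices of a `k`-graph are the degree-zero paths. -/
def IsVertex (v : Λ.Path) : Prop := Λ.d v = 0

/-- `Λ` is row-finite if `|v Λ^p| < ∞` for every vertex `v` and `p ∈ ℕ^k`. -/
def RowFinite : Prop :=
  ∀ v, Λ.IsVertex v → ∀ p : Fin k → ℕ, {μ | Λ.r μ = v ∧ Λ.d μ = p}.Finite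

/-- `Λ` is source-free if `v Λ^p ≠ ∅` for every vertex `v` and `p ∈ ℕ^k`. -/
def SourceFree : Prop :=
  ∀ v, Λ.IsVertex v → ∀ p : Fin k → ℕ, ∃ μ, Λ.r μ = v ∧ Λ.d μ = p

/-- `ΛT`, the set of paths of `Λ` whose source lies in `T`. -/
def tailPaths (T : Set Λ.Path) : Set Λ.Path := {μ | Λ.s μ ∈ T}

/-- `H Λ T`, the set of paths with source in `T` and range in `H`. -/
def cornerPaths (T H : Set Λ.Path) : Set Λ.Path := {μ | Λ.s μ ∈ T ∧ Λ.r μ ∈ H}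

end KGraph

/-- A maximal tail of a `k`-graph. -/
structure MaximalTail {k : ℕ} (Λ : KGraph k) (T : Set Λ.Path) : Prop where
  nonempty : T.Nonempty
  vertex : ∀ v ∈ T, Λ.IsVertex v
  backward_closed : ∀ w, Λ.IsVertex w → ∀ v ∈ T, (∃ μ, Λ.r μ = w ∧ Λ.s μ = v) → w ∈ T
  reaches : ∀ v ∈ T, ∀ p : Fin k → ℕ, ∃ μ, Λ.r μ = v ∧ Λ.d μ = p ∧ Λ.s μ ∈ T
  directed : ∀ v₁ ∈ T, ∀ v₂ ∈ T, ∃ w ∈ T,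
    (∃ μ, Λ.r μ = v₁ ∧ Λ.s μ = w) ∧ (∃ ν, Λ.r ν = v₂ ∧ Λ.s ν = w)

/-- An infinite path of a `k`-graph, i.e. a degree-preserving functor
`x : Ω_k → Λ`; here `val p n` records the segment `x(p, p + n)`. -/
structure InfPath {k : ℕ} (Λ : KGraph k) where
  val : (Fin k → ℕ) → (Fin k → ℕ) → Λ.Path
  d_val : ∀ p n, Λ.d (val p n) = n
  r_val : ∀ p n, Λ.r (val p n) = val p 0
  s_val : ∀ p n, Λ.s (val p n) = val (p + n) 0
  comp_val : ∀ p m n, Λ.comp (val p m) (val (p + m) n) = val p (m + n)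

namespace InfPath

variable {k : ℕ} {Λ : KGraph k}

/-- The shift `σ^n x` of an infinite path. -/
def shift (x : InfPath Λ) (n : Fin k → ℕ) : InfPath Λ where
  val p m := x.val (p + n) m
  d_val p m := x.d_val _ _
  r_val p m := x.r_val _ _
  s_val p m := by rw [x.s_val, add_right_comm]
  comp_val p m m' := by
    show Λ.comp (x.val (p + n) m) (x.val (p + m + n) m') = x.val (p + n) (m + m')
    rw [add_right_comm p m n]; exact x.comp_val (p + n) m m'

/-- An infinite path lies in the subgraph determined by the set of paths `P`
if all of its segments lie in `P`. -/
def inSub (P : Set Λ.Path) (x : InfPath Λ) : Prop := ∀ p n, x.val p n ∈ P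

end InfPath

/-- `z = μ x`: `z` is the infinite path obtained by prepending the finite
path `μ` to the infinite path `x` (which requires `s μ = x(0,0)`). -/
def KGraph.IsExtension {k : ℕ} (Λ : KGraph k) (μ : Λ.Path) (x z : InfPath Λ) : Prop :=
  Λ.s μ = x.val 0 0 ∧ ∀ n, z.val 0 (Λ.d μ + n) = Λ.comp μ (x.val 0 n)

/-- A cycline pair `(μ, 1, ν)` of the subgraph of `Λ` determined by the set of
paths `P`: `s μ = s ν` and `μ x = ν x` for every infinite path `x` of the
subgraph with range `s ν`. -/
def KGraph.IsCyclinePair {k : ℕ} (Λ : KGraph k) (P : Set Λ.Path) (μ ν : Λ.Path) : Prop :=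
  μ ∈ P ∧ ν ∈ P ∧ Λ.s μ = Λ.s ν ∧
    ∀ x : InfPath Λ, x.inSub P →
      ∀ z : InfPath Λ, Λ.IsExtension ν x z → Λ.IsExtension μ x z

/-- `Per_Γ` for the subgraph `Γ` of `Λ` determined by `P`:
the set of all `d μ − d ν` over cycline pairs `(μ, 1, ν)`. -/
def KGraph.PerPair {k : ℕ} (Λ : KGraph k) (P : Set Λ.Path) : Set (Fin k → ℤ) :=
  {m | ∃ μ ν, Λ.IsCyclinePair P μ ν ∧ m = fun i => (Λ.d μ i : ℤ) - (Λ.d ν i : ℤ)}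

/-- A self-similar `k`-graph `(G, Λ)`: an action of the countable discrete
group `G` on `Λ` together with a restriction map `(g, μ) ↦ g|_μ`. -/
structure SelfSimilarSys (k : ℕ) (G : Type) [Group G] [Countable G] (Λ : KGraph k) where
  act : G → Λ.Path → Λ.Path
  res : G → Λ.Path → G
  act_one : ∀ μ, act 1 μ = μ
  act_mul : ∀ g h μ, act (g * h) μ = act g (act h μ)
  d_act : ∀ g μ, Λ.d (act g μ) = Λ.d μ
  s_act : ∀ g μ, Λ.s (act g μ) = act g (Λ.s μ)
  r_act : ∀ g μ, Λ.r (act g μ) = act g (Λ.r μ)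
  act_comp : ∀ g μ ν, Λ.s μ = Λ.r ν →
    act g (Λ.comp μ ν) = Λ.comp (act g μ) (act (res g μ) ν)
  res_vertex : ∀ g v, Λ.IsVertex v → res g v = g
  res_comp : ∀ g μ ν, Λ.s μ = Λ.r ν → res g (Λ.comp μ ν) = res (res g μ) ν
  res_one : ∀ μ, res 1 μ = 1
  res_mul : ∀ g h μ, res (g * h) μ = res g (act h μ) * res h μ

namespace SelfSimilarSys

variable {k : ℕ} {G : Type} [Group G] [Countable G] {Λ : KGraph k}

/-- `(G, Λ)` is pseudo free: `g·μ = μ` and `g|_μ = 1` imply `g = 1`. -/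
def PseudoFree (S : SelfSimilarSys k G Λ) : Prop :=
  ∀ g μ, S.act g μ = μ → S.res g μ = 1 → g = 1

/-- `y = g · x` for infinite paths: `y(0, n) = g · x(0, n)` for all `n`. -/
def IsGAct (S : SelfSimilarSys k G Λ) (g : G) (x y : InfPath Λ) : Prop :=
  ∀ n, y.val 0 n = S.act g (x.val 0 n)

/-- A cycline triple `(μ, g, ν)` of the subgraph of `Λ` determined by `P`:
`s μ = g · s ν` and `μ (g · x) = ν x` for every infinite path `x` of the
subgraph with range `s ν`. -/
def IsCyclineTriple (S : SelfSimilarSys k G Λ) (P : Set Λ.Path)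
    (μ : Λ.Path) (g : G) (ν : Λ.Path) : Prop :=
  μ ∈ P ∧ ν ∈ P ∧ Λ.s μ = S.act g (Λ.s ν) ∧
    ∀ x : InfPath Λ, x.inSub P → Λ.s ν = x.val 0 0 →
      ∀ y : InfPath Λ, S.IsGAct g x y →
        ∀ z : InfPath Λ, Λ.IsExtension ν x z → Λ.IsExtension μ y z

/-- `Per_{G,Γ}` for the subgraph `Γ` of `Λ` determined by `P`:
the set of all `d μ − d ν` over cycline triples `(μ, g, ν)`. -/
def PerTriple (S : SelfSimilarSys k G Λ) (P : Set Λ.Path) : Set (Fin k → ℤ) :=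
  {m | ∃ μ g ν, S.IsCyclineTriple P μ g ν ∧ m = fun i => (Λ.d μ i : ℤ) - (Λ.d ν i : ℤ)}

/-- Membership `y ∈ [x]`: `y` is an infinite path of `ΛT` and
`σ^p x = g · σ^q y` for some `p, q ∈ ℕ^k` and `g ∈ G`. -/
def ClassMem (S : SelfSimilarSys k G Λ) (T : Set Λ.Path) (x y : InfPath Λ) : Prop :=
  y.inSub (Λ.tailPaths T) ∧ ∃ p q : Fin k → ℕ, ∃ g : G, S.IsGAct g (y.shift q) (x.shift p)

end SelfSimilarSys

/-- `H_T`: the vertices `v ∈ T` such that for all `p, q ∈ ℕ^k` with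
`p − q ∈ Per_{ΛT}` and every `μ ∈ v Λ^p T` there is a unique `ν ∈ v Λ^q T`
with `(μ, 1, ν)` a cycline pair of `ΛT`. -/
def KGraph.HSet {k : ℕ} (Λ : KGraph k) (T : Set Λ.Path) : Set Λ.Path :=
  {v | v ∈ T ∧ ∀ p q : Fin k → ℕ,
    (fun i => (p i : ℤ) - (q i : ℤ)) ∈ Λ.PerPair (Λ.tailPaths T) →
      ∀ μ, Λ.r μ = v → Λ.d μ = p → Λ.s μ ∈ T →
        ∃! ν, Λ.r ν = v ∧ Λ.d ν = q ∧ Λ.IsCyclinePair (Λ.tailPaths T) μ ν}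

/-- The edges of `Λ^1 T` other than `e₀`. -/
def IsOldEdge (Λ : KGraph 1) (T : Set Λ.Path) (e₀ e : Λ.Path) : Prop :=
  Λ.d e = (fun _ => 1) ∧ Λ.s e ∈ T ∧ e ≠ e₀


/-! ### Auxiliary construction of the extended graph -/

namespace ExtAux

section Graph

variable (Λ : KGraph 1) (T : Set Λ.Path) (e₀ v₀ : Λ.Path)

/-- Combined type for vertices and edges of the extended graph `E`. -/
abbrev Ed := Λ.Path ⊕ ℕ

/-- Source of an edge of `E`. -/
def src : Ed Λ → Ed Λ
  | .inl a => .inl (Λ.s a)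
  | .inr n => .inr n

/-- Range of an edge of `E`. -/
def rng : Ed Λ → Ed Λ
  | .inl a => .inl (Λ.r a)
  | .inr n => if n ≤ 1 then .inl v₀ else .inr (n - 1)

/-- Genuine vertices of `E`. -/
def goodV : Ed Λ → Prop
  | .inl u => u ∈ T
  | .inr n => 1 ≤ n

/-- Genuine edges of `E`. -/
def goodE : Ed Λ → Prop
  | .inl a => IsOldEdge Λ T e₀ a
  | .inr n => 1 ≤ n

/-- Range vertex of a list of edges (ordered from range to source) with
source vertex `v`. -/
def rfirst (L : List (Ed Λ)) (v : Ed Λ) : Ed Λ :=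
  match L with
  | [] => v
  | e :: _ => rng Λ v₀ e

/-- Well-formedness of an edge list with source vertex `v`. -/
def wfL : List (Ed Λ) → Ed Λ → Prop
  | [], _ => True
  | e :: L, v => goodE Λ T e₀ e ∧ src Λ e = rfirst Λ v₀ L v ∧ wfL L v

/-- The paths of the extended graph. -/
def EPath : Type :=
  {p : Ed Λ × List (Ed Λ) // goodV Λ T p.1 ∧ wfL Λ T e₀ v₀ p.2 p.1}

variable {Λ T e₀ v₀}

theorem goodV_rng (hT : MaximalTail Λ T) (hv₀ : v₀ ∈ T) {e : Ed Λ}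
    (he : goodE Λ T e₀ e) : goodV Λ T (rng Λ v₀ e) := by
  cases e with
  | inl a =>
      exact hT.backward_closed _ (Λ.d_r a) _ he.2.1 ⟨a, rfl, rfl⟩
  | inr n =>
      simp only [rng]
      split
      · exact hv₀
      · simpa [goodV] using by omega
  
theorem goodV_src {e : Ed Λ} (he : goodE Λ T e₀ e) : goodV Λ T (src Λ e) := by
  cases e with
  | inl a => exact he.2.1
  | inr n => exact he

theorem goodV_rfirst (hT : MaximalTail Λ T) (hv₀ : v₀ ∈ T) {L : List (Ed Λ)}
    {v : Ed Λ} (hw : wfL Λ T e₀ v₀ L v) (hv : goodV Λ T v) :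
    goodV Λ T (rfirst Λ v₀ L v) := by
  cases L with
  | nil => exact hv
  | cons e L => exact goodV_rng hT hv₀ hw.1

theorem rfirst_append {L₁ L₂ : List (Ed Λ)} {v w : Ed Λ}
    (h : w = rfirst Λ v₀ L₂ v) :
    rfirst Λ v₀ (L₁ ++ L₂) v = rfirst Λ v₀ L₁ w := by
  cases L₁ with
  | nil => simpa [rfirst] using h.symm
  | cons e L => rfl

theorem wfL_append {L₁ L₂ : List (Ed Λ)} {v w : Ed Λ}
    (h₁ : wfL Λ T e₀ v₀ L₁ w) (h₂ : wfL Λ T e₀ v₀ L₂ v)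
    (hw : w = rfirst Λ v₀ L₂ v) :
    wfL Λ T e₀ v₀ (L₁ ++ L₂) v := by
  induction L₁ with
  | nil => simpa using h₂
  | cons e L ih =>
      refine ⟨h₁.1, ?_, ih h₁.2.2⟩
      show src Λ e = rfirst Λ v₀ (L ++ L₂) v
      rw [rfirst_append hw]
      exact h₁.2.1

theorem rfirst_take_drop (L : List (Ed Λ)) (i : ℕ) (v : Ed Λ) :
    rfirst Λ v₀ (L.take i) (rfirst Λ v₀ (L.drop i) v) = rfirst Λ v₀ L v := by
  cases i with
  | zero => rfl
  | succ i => cases L with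
    | nil => rfl
    | cons e L => rfl

theorem wfL_drop {L : List (Ed Λ)} {v : Ed Λ} (h : wfL Λ T e₀ v₀ L v) (i : ℕ) :
    wfL Λ T e₀ v₀ (L.drop i) v := by
  induction L generalizing i with
  | nil => simpa using h
  | cons e L ih =>
      cases i with
      | zero => exact h
      | succ i => exact ih h.2.2 i

theorem wfL_take {L : List (Ed Λ)} {v : Ed Λ} (h : wfL Λ T e₀ v₀ L v) (i : ℕ) :
    wfL Λ T e₀ v₀ (L.take i) (rfirst Λ v₀ (L.drop i) v) := by
  induction L generalizing i with
  | nil => simp [wfL]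
  | cons e L ih =>
      cases i with
      | zero => trivial
      | succ i =>
          refine ⟨h.1, ?_, ih h.2.2 i⟩
          show src Λ e = rfirst Λ v₀ (L.take i) (rfirst Λ v₀ (L.drop i) v)
          rw [rfirst_take_drop]
          exact h.2.1

theorem fin1_ext {f g : Fin 1 → ℕ} (h : f 0 = g 0) : f = g := by
  funext i
  rw [Fin.eq_zero i]; exact h

variable (Λ T e₀ v₀)

instance : Countable (EPath Λ T e₀ v₀) := by
  have : Countable Λ.Path := Λ.countable
  unfold EPath
  infer_instance

variable (hT : MaximalTail Λ T) (hv₀ : v₀ ∈ T)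

variable {Λ T e₀ v₀} in
theorem epath_ext {μ ν : EPath Λ T e₀ v₀} (h1 : μ.1.1 = ν.1.1)
    (h2 : μ.1.2 = ν.1.2) : μ = ν :=
  Subtype.ext (Prod.ext h1 h2)

/-- Source map of `E`. -/
def es (μ : EPath Λ T e₀ v₀) : EPath Λ T e₀ v₀ := ⟨(μ.1.1, []), μ.2.1, trivial⟩

variable (hT : MaximalTail Λ T) (hv₀ : v₀ ∈ T)

/-- Range map of `E`. -/
def er (μ : EPath Λ T e₀ v₀) : EPath Λ T e₀ v₀ :=
  ⟨(rfirst Λ v₀ μ.1.2 μ.1.1, []), goodV_rfirst hT hv₀ μ.2.2 μ.2.1, trivial⟩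

open scoped Classical in
/-- Composition in `E`. -/
noncomputable def ecomp (μ ν : EPath Λ T e₀ v₀) : EPath Λ T e₀ v₀ :=
  if h : μ.1.1 = rfirst Λ v₀ ν.1.2 ν.1.1 then
    ⟨(ν.1.1, μ.1.2 ++ ν.1.2), ν.2.1, wfL_append μ.2.2 ν.2.2 h⟩
  else μ

variable {Λ T e₀ v₀} in
theorem ecomp_mk {v1 v2 : Ed Λ} {L1 L2 : List (Ed Λ)} {h1 h2}
    (h : v1 = rfirst Λ v₀ L2 v2) :
    ecomp Λ T e₀ v₀ ⟨(v1, L1), h1⟩ ⟨(v2, L2), h2⟩ =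
      ⟨(v2, L1 ++ L2), h2.1, wfL_append h1.2 h2.2 h⟩ :=
  dif_pos h

/-- The extended graph `E`. -/
noncomputable def extGraph : KGraph 1 where
  Path := EPath Λ T e₀ v₀
  countable := inferInstance
  r := er Λ T e₀ v₀ hT hv₀
  s := es Λ T e₀ v₀
  d μ := fun _ => μ.1.2.length
  comp := ecomp Λ T e₀ v₀
  d_r μ := rfl
  d_s μ := rfl
  r_r μ := rfl
  s_r μ := rfl
  r_s μ := rfl
  s_s μ := rfl
  eq_r_of_d_eq_zero μ h := by
    have h0 : μ.1.2.length = 0 := congrFun h 0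
    obtain ⟨⟨v, L⟩, hμ⟩ := μ
    obtain rfl : L = [] := List.length_eq_zero_iff.mp h0
    rfl
  comp_id μ := by
    obtain ⟨⟨v, L⟩, hμ⟩ := μ
    rw [show es Λ T e₀ v₀ ⟨(v, L), hμ⟩ = ⟨(v, []), hμ.1, trivial⟩ from rfl,
      ecomp_mk (show v = rfirst Λ v₀ [] v from rfl)]
    exact epath_ext rfl (by simp)
  id_comp μ := by
    obtain ⟨⟨v, L⟩, hμ⟩ := μ
    rw [show er Λ T e₀ v₀ hT hv₀ ⟨(v, L), hμ⟩ =
      ⟨(rfirst Λ v₀ L v, []), goodV_rfirst hT hv₀ hμ.2 hμ.1, trivial⟩ from rfl,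
      ecomp_mk (show rfirst Λ v₀ L v = rfirst Λ v₀ L v from rfl)]
    exact epath_ext rfl (by simp)
  r_comp μ ν h := by
    obtain ⟨⟨v1, L1⟩, hμ⟩ := μ
    obtain ⟨⟨v2, L2⟩, hν⟩ := ν
    have hv : v1 = rfirst Λ v₀ L2 v2 := congrArg (fun x => x.1.1) h
    rw [ecomp_mk hv]
    exact epath_ext (rfirst_append hv) rfl
  s_comp μ ν h := by
    obtain ⟨⟨v1, L1⟩, hμ⟩ := μ
    obtain ⟨⟨v2, L2⟩, hν⟩ := ν
    have hv : v1 = rfirst Λ v₀ L2 v2 := congrArg (fun x => x.1.1) h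
    rw [ecomp_mk hv]
    rfl
  d_comp μ ν h := by
    obtain ⟨⟨v1, L1⟩, hμ⟩ := μ
    obtain ⟨⟨v2, L2⟩, hν⟩ := ν
    have hv : v1 = rfirst Λ v₀ L2 v2 := congrArg (fun x => x.1.1) h
    rw [ecomp_mk hv]
    funext i
    simp [Pi.add_apply]
  comp_assoc μ ν ξ h₁ h₂ := by
    obtain ⟨⟨v1, L1⟩, hμ⟩ := μ
    obtain ⟨⟨v2, L2⟩, hν⟩ := ν
    obtain ⟨⟨v3, L3⟩, hξ⟩ := ξ
    have hv₁ : v1 = rfirst Λ v₀ L2 v2 := congrArg (fun x => x.1.1) h₁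
    have hv₂ : v2 = rfirst Λ v₀ L3 v3 := congrArg (fun x => x.1.1) h₂
    rw [ecomp_mk hv₁, ecomp_mk hv₂, ecomp_mk hv₂,
      ecomp_mk (show v1 = rfirst Λ v₀ (L2 ++ L3) v3 from
        (rfirst_append hv₂) ▸ hv₁)]
    exact epath_ext rfl (by simp)
  factor μ p q h := by
    have hlen : μ.1.2.length = p 0 + q 0 := congrFun h 0
    obtain ⟨⟨v, L⟩, hμ⟩ := μ
    simp only at hlen
    set i := p 0 with hi
    refine ⟨(⟨(rfirst Λ v₀ (L.drop i) v, L.take i),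
        goodV_rfirst hT hv₀ (wfL_drop hμ.2 i) hμ.1, wfL_take hμ.2 i⟩,
      ⟨(v, L.drop i), hμ.1, wfL_drop hμ.2 i⟩), ⟨?_, ?_, ?_, ?_⟩, ?_⟩
    · exact epath_ext rfl rfl
    · exact fin1_ext (by simp only [List.length_take]; omega)
    · exact fin1_ext (by simp only [List.length_drop]; omega)
    · rw [ecomp_mk (show rfirst Λ v₀ (L.drop i) v = rfirst Λ v₀ (L.drop i) v from rfl)]
      exact epath_ext rfl (by simp)
    · rintro ⟨⟨⟨va, La⟩, hα⟩, ⟨⟨vb, Lb⟩, hβ⟩⟩ ⟨hs, hp, hq, hc⟩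
      have hvc : va = rfirst Λ v₀ Lb vb := congrArg (fun x => x.1.1) hs
      rw [ecomp_mk hvc] at hc
      have hv : vb = v := congrArg (fun x => x.1.1) hc
      have hL : La ++ Lb = L := congrArg (fun x => x.1.2) hc
      have hla : La.length = i := congrFun hp 0
      have htd : La = L.take i ∧ Lb = L.drop i :=
        List.append_inj (hL.trans (List.take_append_drop i L).symm)
          (by rw [hla, List.length_take]; omega)
      refine Prod.ext (epath_ext ?_ ?_) (epath_ext ?_ ?_)
      · simp only; rw [hvc, htd.2, hv]
      · exact htd.1
      · exact hv
      · exact htd.2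

end Graph

end ExtAux

namespace ExtAux

section Sys

variable {G : Type} [Group G] [Countable G]
variable (Λ : KGraph 1) (T : Set Λ.Path) (e₀ v₀ : Λ.Path)
variable (S : SelfSimilarSys 1 G Λ)

/-- Action of `G` on edges of `E`. -/
def actE (g : G) : Ed Λ → Ed Λ
  | .inl a => .inl (S.act g a)
  | .inr n => .inr n

/-- Restriction for single edges of `E`. -/
def resE (g : G) : Ed Λ → G
  | .inl a => S.res g a
  | .inr _ => g

/-- Action of `G` on edge lists. -/
def mapAct : G → List (Ed Λ) → List (Ed Λ)
  | _, [] => []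
  | g, e :: L => actE Λ S g e :: mapAct (resE Λ S g e) L

/-- Restriction along an edge list. -/
def resList : G → List (Ed Λ) → G
  | g, [] => g
  | g, e :: L => resList (resE Λ S g e) L

variable {Λ T e₀ v₀ S}

theorem actE_one (e : Ed Λ) : actE Λ S (1 : G) e = e := by
  cases e <;> simp [actE, S.act_one]

theorem actE_mul (g h : G) (e : Ed Λ) :
    actE Λ S (g * h) e = actE Λ S g (actE Λ S h e) := by
  cases e <;> simp [actE, S.act_mul]

theorem resE_one (e : Ed Λ) : resE Λ S (1 : G) e = 1 := by
  cases e <;> simp [resE, S.res_one]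

theorem resE_mul (g h : G) (e : Ed Λ) :
    resE Λ S (g * h) e = resE Λ S g (actE Λ S h e) * resE Λ S h e := by
  cases e <;> simp [resE, actE, S.res_mul]

theorem mapAct_one : ∀ L : List (Ed Λ), mapAct Λ S (1 : G) L = L
  | [] => rfl
  | e :: L => by rw [mapAct, actE_one, resE_one, mapAct_one L]

theorem resList_one : ∀ L : List (Ed Λ), resList Λ S (1 : G) L = 1
  | [] => rfl
  | e :: L => by rw [resList, resE_one, resList_one L]

theorem mapAct_mul (g h : G) :
    ∀ L : List (Ed Λ), mapAct Λ S (g * h) L = mapAct Λ S g (mapAct Λ S h L)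
  | [] => rfl
  | e :: L => by
      rw [mapAct, actE_mul, resE_mul, mapAct_mul _ _ L, mapAct, mapAct]

theorem resList_mul (g h : G) :
    ∀ L : List (Ed Λ),
      resList Λ S (g * h) L = resList Λ S g (mapAct Λ S h L) * resList Λ S h L
  | [] => rfl
  | e :: L => by
      rw [resList, resE_mul, resList_mul _ _ L, mapAct, resList, resList]

theorem mapAct_append (g : G) :
    ∀ L₁ L₂ : List (Ed Λ),
      mapAct Λ S g (L₁ ++ L₂) = mapAct Λ S g L₁ ++ mapAct Λ S (resList Λ S g L₁) L₂
  | [], L₂ => rfl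
  | e :: L₁, L₂ => by
      rw [List.cons_append, mapAct, mapAct_append _ L₁ L₂, mapAct, resList,
        List.cons_append]

theorem resList_append (g : G) :
    ∀ L₁ L₂ : List (Ed Λ),
      resList Λ S g (L₁ ++ L₂) = resList Λ S (resList Λ S g L₁) L₂
  | [], L₂ => rfl
  | e :: L₁, L₂ => by
      rw [List.cons_append, resList, resList_append _ L₁ L₂, resList]

theorem length_mapAct (g : G) :
    ∀ L : List (Ed Λ), (mapAct Λ S g L).length = L.length
  | [] => rfl
  | e :: L => by rw [mapAct, List.length_cons, List.length_cons, length_mapAct _ L]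

theorem resList_eq_one (hPF : S.PseudoFree) :
    ∀ (L : List (Ed Λ)) (g : G), mapAct Λ S g L = L → resList Λ S g L = 1 → g = 1
  | [], g, _, hr => hr
  | e :: L, g, ha, hr => by
      rw [mapAct] at ha
      have h1 : actE Λ S g e = e := (List.cons.injEq _ _ _ _ ▸ ha).1
      have h2 : mapAct Λ S (resE Λ S g e) L = L := (List.cons.injEq _ _ _ _ ▸ ha).2
      rw [resList] at hr
      have h3 : resE Λ S g e = 1 := resList_eq_one hPF L _ h2 hr
      cases e with
      | inl a =>
          exact hPF g a (by simpa [actE] using h1) h3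
      | inr n => exact h3

section WithHyp

variable (hfix : ∀ g v, Λ.IsVertex v → S.act g v = v)
variable (he₀ : Λ.r e₀ = v₀ ∧ Λ.d e₀ = (fun _ => 1) ∧ Λ.s e₀ ∈ T)
variable (huniq : ∀ e, Λ.r e = v₀ → Λ.d e = (fun _ => 1) → Λ.s e ∈ T → e = e₀)

include hfix he₀ huniq in
theorem act_e₀ (g : G) : S.act g e₀ = e₀ := by
  apply huniq
  · rw [S.r_act, hfix g _ (Λ.d_r e₀), he₀.1]
  · rw [S.d_act]; exact he₀.2.1
  · rw [S.s_act, hfix g _ (Λ.d_s e₀)]; exact he₀.2.2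

include hfix he₀ huniq in
theorem isOldEdge_act {a : Λ.Path} (ha : IsOldEdge Λ T e₀ a) (g : G) :
    IsOldEdge Λ T e₀ (S.act g a) := by
  refine ⟨by rw [S.d_act]; exact ha.1, by rw [S.s_act, hfix g _ (Λ.d_s a)]; exact ha.2.1, ?_⟩
  intro hcon
  apply ha.2.2
  have : S.act g⁻¹ (S.act g a) = a := by rw [← S.act_mul, inv_mul_cancel, S.act_one]
  rw [← this, hcon, act_e₀ hfix he₀ huniq]

include hfix he₀ huniq in
theorem goodE_actE {e : Ed Λ} (he : goodE Λ T e₀ e) (g : G) :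
    goodE Λ T e₀ (actE Λ S g e) := by
  cases e with
  | inl a => exact isOldEdge_act hfix he₀ huniq he g
  | inr n => exact he

include hfix in
theorem src_actE (g : G) (e : Ed Λ) : src Λ (actE Λ S g e) = src Λ e := by
  cases e with
  | inl a => simp [actE, src, S.s_act, hfix g _ (Λ.d_s a)]
  | inr n => rfl

include hfix in
theorem rng_actE (g : G) (e : Ed Λ) :
    rng Λ v₀ (actE Λ S g e) = rng Λ v₀ e := by
  cases e with
  | inl a => simp [actE, rng, S.r_act, hfix g _ (Λ.d_r a)]
  | inr n => rfl

include hfix in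
theorem rfirst_mapAct (g : G) (L : List (Ed Λ)) (v : Ed Λ) :
    rfirst Λ v₀ (mapAct Λ S g L) v = rfirst Λ v₀ L v := by
  cases L with
  | nil => rfl
  | cons e L => exact rng_actE hfix g e

include hfix he₀ huniq in
theorem wfL_mapAct {L : List (Ed Λ)} {v : Ed Λ} :
    ∀ g : G, wfL Λ T e₀ v₀ L v → wfL Λ T e₀ v₀ (mapAct Λ S g L) v := by
  induction L with
  | nil => intro g _; trivial
  | cons e L ih =>
      intro g h
      exact ⟨goodE_actE hfix he₀ huniq h.1 g,
        by rw [src_actE hfix, rfirst_mapAct hfix]; exact h.2.1,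
        ih _ h.2.2⟩

variable (Λ T e₀ v₀ S)

/-- Action of `G` on paths of `E`. -/
def eact (g : G) (μ : EPath Λ T e₀ v₀) : EPath Λ T e₀ v₀ :=
  ⟨(μ.1.1, mapAct Λ S g μ.1.2), μ.2.1, wfL_mapAct hfix he₀ huniq g μ.2.2⟩

/-- Restriction map of `G` on paths of `E`. -/
def eres (g : G) (μ : EPath Λ T e₀ v₀) : G := resList Λ S g μ.1.2

variable {Λ T e₀ v₀ S}

theorem eact_mk (g : G) (v : Ed Λ) (L : List (Ed Λ)) (h) :
    eact Λ T e₀ v₀ S hfix he₀ huniq g ⟨(v, L), h⟩ =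
      ⟨(v, mapAct Λ S g L), h.1, wfL_mapAct hfix he₀ huniq g h.2⟩ := rfl

variable (Λ T e₀ v₀ S)
variable (hT : MaximalTail Λ T) (hv₀ : v₀ ∈ T)

/-- The induced self-similar system on the extended graph. -/
noncomputable def extSys : SelfSimilarSys 1 G (extGraph Λ T e₀ v₀ hT hv₀) where
  act := eact Λ T e₀ v₀ S hfix he₀ huniq
  res := eres Λ T e₀ v₀ S
  act_one μ := epath_ext rfl (mapAct_one μ.1.2)
  act_mul g h μ := epath_ext rfl (mapAct_mul g h μ.1.2)
  d_act g μ := funext fun i => length_mapAct g μ.1.2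
  s_act g μ := epath_ext rfl rfl
  r_act g μ := epath_ext (rfirst_mapAct hfix g μ.1.2 μ.1.1) rfl
  act_comp g μ ν h := by
    obtain ⟨⟨v1, L1⟩, hμ⟩ := μ
    obtain ⟨⟨v2, L2⟩, hν⟩ := ν
    have hv : v1 = rfirst Λ v₀ L2 v2 := congrArg (fun x => x.1.1) h
    show eact Λ T e₀ v₀ S hfix he₀ huniq g
        (ecomp Λ T e₀ v₀ ⟨(v1, L1), hμ⟩ ⟨(v2, L2), hν⟩) = _
    rw [ecomp_mk hv, eact_mk, eact_mk, eact_mk]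
    show _ = ecomp Λ T e₀ v₀ _ _
    rw [ecomp_mk (show v1 = rfirst Λ v₀
      (mapAct Λ S (eres Λ T e₀ v₀ S g ⟨(v1, L1), hμ⟩) L2) v2 from by
        rw [rfirst_mapAct hfix]; exact hv)]
    exact epath_ext rfl (mapAct_append g L1 L2)
  res_vertex g v hv := by
    obtain ⟨⟨w, L⟩, hwf⟩ := v
    have h0 : L.length = 0 := congrFun hv 0
    obtain rfl : L = [] := List.length_eq_zero_iff.mp h0
    rfl
  res_comp g μ ν h := by
    obtain ⟨⟨v1, L1⟩, hμ⟩ := μ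
    obtain ⟨⟨v2, L2⟩, hν⟩ := ν
    have hv : v1 = rfirst Λ v₀ L2 v2 := congrArg (fun x => x.1.1) h
    show eres Λ T e₀ v₀ S g (ecomp Λ T e₀ v₀ ⟨(v1, L1), hμ⟩ ⟨(v2, L2), hν⟩) = _
    rw [ecomp_mk hv]
    exact resList_append g L1 L2
  res_one μ := resList_one μ.1.2
  res_mul g h μ := resList_mul g h μ.1.2

theorem extSys_pseudoFree (hPF : S.PseudoFree) :
    (extSys Λ T e₀ v₀ S hfix he₀ huniq hT hv₀).PseudoFree := by
  intro g μ ha hr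
  obtain ⟨⟨v, L⟩, hμ⟩ := μ
  have ha' : mapAct Λ S g L = L := congrArg (fun x => x.1.2) ha
  exact resList_eq_one hPF L g ha' hr

end WithHyp

end Sys

end ExtAux

namespace ExtAux

section RFSF

variable (Λ : KGraph 1) (T : Set Λ.Path) (e₀ v₀ : Λ.Path)

/-- The set of edges of `E` with range `v`. -/
def edgesTo (v : Ed Λ) : Set (Ed Λ) := {e | goodE Λ T e₀ e ∧ rng Λ v₀ e = v}

/-- The set of paths of `E` of length `ℓ` with range `v`, as raw pairs. -/
def pathSet (ℓ : ℕ) (v : Ed Λ) : Set (Ed Λ × List (Ed Λ)) :=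
  {p | goodV Λ T p.1 ∧ wfL Λ T e₀ v₀ p.2 p.1 ∧ rfirst Λ v₀ p.2 p.1 = v ∧
    p.2.length = ℓ}

variable {Λ T e₀ v₀}

theorem edgesTo_finite (hRF : Λ.RowFinite) (hT : MaximalTail Λ T) {v : Ed Λ}
    (hv : goodV Λ T v) : (edgesTo Λ T e₀ v₀ v).Finite := by
  cases v with
  | inl u =>
      refine Set.Finite.subset
        (((hRF u (hT.vertex u hv) (fun _ => 1)).image Sum.inl).union
          (Set.finite_singleton (Sum.inr 1))) ?_
      rintro (a | n) ⟨hg, hr⟩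
      · exact Or.inl ⟨a, ⟨Sum.inl.inj hr, hg.1⟩, rfl⟩
      · right
        simp only [rng] at hr
        split at hr
        · have h1 : (1 : ℕ) ≤ n := hg
          have : n = 1 := by omega
          simp [this]
        · exact absurd hr (by simp)
  | inr m =>
      refine Set.Finite.subset (Set.finite_singleton (Sum.inr (m + 1))) ?_
      rintro (a | n) ⟨hg, hr⟩
      · exact absurd hr (by simp [rng])
      · simp only [rng] at hr
        split at hr
        · exact absurd hr (by simp)
        · have : n = m + 1 := by
            have hn : goodE Λ T e₀ (Sum.inr n : Ed Λ) := hg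
            have : n - 1 = m := Sum.inr.inj hr
            have h1 : 1 ≤ n := hn
            omega
          simp [this]

theorem pathSet_finite (hRF : Λ.RowFinite) (hT : MaximalTail Λ T) :
    ∀ ℓ (v : Ed Λ), goodV Λ T v → (pathSet Λ T e₀ v₀ ℓ v).Finite := by
  intro ℓ
  induction ℓ with
  | zero =>
      intro v hv
      refine Set.Finite.subset (Set.finite_singleton (v, [])) ?_
      rintro ⟨w, L⟩ ⟨h1, h2, h3, h4⟩
      obtain rfl : L = [] := List.length_eq_zero_iff.mp h4
      obtain rfl : w = v := h3
      rfl
  | succ ℓ ih =>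
      intro v hv
      refine Set.Finite.subset
        (Set.Finite.biUnion (edgesTo_finite (e₀ := e₀) (v₀ := v₀) hRF hT hv)
          (fun e he => Set.Finite.image (fun p => (p.1, e :: p.2))
            (ih (src Λ e) (goodV_src (e₀ := e₀) he.1)))) ?_
      rintro ⟨w, L⟩ ⟨h1, h2, h3, h4⟩
      cases L with
      | nil => simp at h4
      | cons e L =>
          refine Set.mem_biUnion (show e ∈ edgesTo Λ T e₀ v₀ v from ⟨h2.1, h3⟩) ?_
          exact ⟨(w, L), ⟨h1, h2.2.2, h2.2.1.symm, by simpa using h4⟩, rfl⟩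

theorem exists_edgeTo (hT : MaximalTail Λ T) (hv₀ : v₀ ∈ T)
    (he₀r : Λ.r e₀ = v₀) {v : Ed Λ} (hv : goodV Λ T v) :
    ∃ e, goodE Λ T e₀ e ∧ rng Λ v₀ e = v := by
  classical
  cases v with
  | inl u =>
      obtain ⟨a, har, had, has⟩ := hT.reaches u hv (fun _ => 1)
      by_cases h : a = e₀
      · subst h
        refine ⟨Sum.inr 1, le_refl 1, ?_⟩
        simp only [rng, if_pos (le_refl 1)]
        rw [← har, he₀r]
      · exact ⟨Sum.inl a, ⟨had, has, h⟩, by simp [rng, har]⟩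
  | inr m =>
      have hm : 1 ≤ m := hv
      refine ⟨Sum.inr (m + 1), Nat.le_add_left 1 m, ?_⟩
      show (if m + 1 ≤ 1 then (Sum.inl v₀ : Ed Λ) else Sum.inr (m + 1 - 1)) = Sum.inr m
      rw [if_neg (by omega)]
      simp

theorem pathSet_nonempty (hT : MaximalTail Λ T) (hv₀ : v₀ ∈ T)
    (he₀r : Λ.r e₀ = v₀) :
    ∀ ℓ (v : Ed Λ), goodV Λ T v → ∃ p, p ∈ pathSet Λ T e₀ v₀ ℓ v := by
  intro ℓ
  induction ℓ with
  | zero => exact fun v hv => ⟨(v, []), hv, trivial, rfl, rfl⟩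
  | succ ℓ ih =>
      intro v hv
      obtain ⟨e, hge, hre⟩ := exists_edgeTo hT hv₀ he₀r hv
      obtain ⟨⟨w, L⟩, h1, h2, h3, h4⟩ := ih (src Λ e) (goodV_src hge)
      exact ⟨(w, e :: L), h1, ⟨hge, h3.symm, h2⟩, hre, by simp [h4]⟩

theorem extGraph_rowFinite (hRF : Λ.RowFinite) (hT : MaximalTail Λ T)
    (hv₀ : v₀ ∈ T) : (extGraph Λ T e₀ v₀ hT hv₀).RowFinite := by
  intro v hv p
  obtain ⟨⟨w, L⟩, hwf⟩ := v
  obtain rfl : L = [] := List.length_eq_zero_iff.mp (congrFun hv 0)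
  apply Set.Finite.of_finite_image (f := Subtype.val)
    ?_ Subtype.val_injective.injOn
  apply (pathSet_finite hRF hT (p 0) w hwf.1).subset
  rintro _ ⟨μ, ⟨hr, hd⟩, rfl⟩
  exact ⟨μ.2.1, μ.2.2, congrArg (fun x => x.1.1) hr, congrFun hd 0⟩

theorem extGraph_sourceFree (hT : MaximalTail Λ T) (hv₀ : v₀ ∈ T)
    (he₀r : Λ.r e₀ = v₀) : (extGraph Λ T e₀ v₀ hT hv₀).SourceFree := by
  intro v hv p
  obtain ⟨⟨w, L⟩, hwf⟩ := v
  obtain rfl : L = [] := List.length_eq_zero_iff.mp (congrFun hv 0)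
  obtain ⟨⟨w', L'⟩, h1, h2, h3, h4⟩ := pathSet_nonempty hT hv₀ he₀r (p 0) w hwf.1
  exact ⟨⟨(w', L'), h1, h2⟩, epath_ext h3 rfl, fin1_ext h4⟩

end RFSF

section Maps

variable (Λ : KGraph 1) (T : Set Λ.Path) (e₀ v₀ : Λ.Path) (hv₀ : v₀ ∈ T)

open scoped Classical in
/-- The vertex embedding `T → E`. -/
noncomputable def vmapE (v : Λ.Path) : EPath Λ T e₀ v₀ :=
  if h : v ∈ T then ⟨(.inl v, []), h, trivial⟩ else ⟨(.inl v₀, []), hv₀, trivial⟩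

open scoped Classical in
/-- The new vertices `vₙ` of `E`. -/
noncomputable def vnewE (n : ℕ) : EPath Λ T e₀ v₀ :=
  if h : 1 ≤ n then ⟨(.inr n, []), h, trivial⟩ else ⟨(.inl v₀, []), hv₀, trivial⟩

open scoped Classical in
/-- The old-edge embedding. -/
noncomputable def emapE (e : Λ.Path) : EPath Λ T e₀ v₀ :=
  if h : IsOldEdge Λ T e₀ e then ⟨(.inl (Λ.s e), [.inl e]), h.2.1, h, rfl, trivial⟩
  else ⟨(.inl v₀, []), hv₀, trivial⟩

open scoped Classical in
/-- The new edges `eₙ` of `E`. -/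
noncomputable def enewE (n : ℕ) : EPath Λ T e₀ v₀ :=
  if h : 1 ≤ n then ⟨(.inr n, [.inr n]), h, h, rfl, trivial⟩
  else ⟨(.inl v₀, []), hv₀, trivial⟩

variable {Λ T e₀ v₀}

theorem vmapE_mem {v : Λ.Path} (h : v ∈ T) :
    vmapE Λ T e₀ v₀ hv₀ v = ⟨(.inl v, []), h, trivial⟩ := dif_pos h

theorem vnewE_pos {n : ℕ} (h : 1 ≤ n) :
    vnewE Λ T e₀ v₀ hv₀ n = ⟨(.inr n, []), h, trivial⟩ := dif_pos h

theorem vnewE_zero :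
    vnewE Λ T e₀ v₀ hv₀ 0 = vmapE Λ T e₀ v₀ hv₀ v₀ := by
  simp [vnewE, vmapE, hv₀]; rfl

theorem emapE_old {e : Λ.Path} (h : IsOldEdge Λ T e₀ e) :
    emapE Λ T e₀ v₀ hv₀ e = ⟨(.inl (Λ.s e), [.inl e]), h.2.1, h, rfl, trivial⟩ :=
  dif_pos h

theorem enewE_pos {n : ℕ} (h : 1 ≤ n) :
    enewE Λ T e₀ v₀ hv₀ n = ⟨(.inr n, [.inr n]), h, h, rfl, trivial⟩ := dif_pos h

end Maps

end ExtAux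
/-- For a pseudo free self-similar `1`-graph `(G, Λ)` with `g · v = v` for
vertices, a maximal tail `T` and a vertex `v₀ ∈ T` with `v₀ Λ^1 T = {e₀}`:
`g · e₀ = e₀` for all `g`, and the graph `E` obtained from `ΛT` by deleting
`e₀` and attaching an infinite head `v₀ ← v₁ ← v₂ ← ⋯` (via new edges `eₙ`
with `r(eₙ) = v_{n−1}`, `s(eₙ) = vₙ`), with `G` acting as before on the old
edges and trivially on the new ones (`g · eₙ = eₙ`, `g|_{eₙ} = g`,
`g · vₙ = vₙ`, `g|_{vₙ} = g`), is a row-finite source-free `1`-graph such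
that `(G, E)` is a pseudo free self-similar `1`-graph. -/
theorem extended_graph_selfSimilar
    (G : Type) [Group G] [Countable G] (Λ : KGraph 1)
    (hRF : Λ.RowFinite) (hSF : Λ.SourceFree)
    (S : SelfSimilarSys 1 G Λ) (hPF : S.PseudoFree)
    (hfix : ∀ g v, Λ.IsVertex v → S.act g v = v)
    (T : Set Λ.Path) (hT : MaximalTail Λ T)
    (v₀ e₀ : Λ.Path) (hv₀ : v₀ ∈ T)
    (he₀ : Λ.r e₀ = v₀ ∧ Λ.d e₀ = (fun _ => 1) ∧ Λ.s e₀ ∈ T)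
    (huniq : ∀ e, Λ.r e = v₀ → Λ.d e = (fun _ => 1) → Λ.s e ∈ T → e = e₀) :
    -- g · e₀ = e₀ for every g ∈ G
    (∀ g : G, S.act g e₀ = e₀) ∧
    ∃ (E : KGraph 1) (S' : SelfSimilarSys 1 G E)
      (vmap : Λ.Path → E.Path) (vnew : ℕ → E.Path)
      (emap : Λ.Path → E.Path) (enew : ℕ → E.Path),
      -- the vertices of E: E^0 = T ⨿ {vₙ}_{n ≥ 1}
      (∀ v ∈ T, E.IsVertex (vmap v)) ∧
      (∀ n, E.IsVertex (vnew n)) ∧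
      vnew 0 = vmap v₀ ∧
      (∀ v ∈ T, ∀ w ∈ T, vmap v = vmap w → v = w) ∧
      (∀ m n, 1 ≤ m → 1 ≤ n → vnew m = vnew n → m = n) ∧
      (∀ v ∈ T, ∀ n, 1 ≤ n → vmap v ≠ vnew n) ∧
      (∀ w, E.IsVertex w → (∃ v ∈ T, w = vmap v) ∨ (∃ n, 1 ≤ n ∧ w = vnew n)) ∧
      -- the edges of E: E^1 = (Λ^1 T \ {e₀}) ⨿ {eₙ}_{n ≥ 1}
      (∀ e, IsOldEdge Λ T e₀ e →
        E.d (emap e) = (fun _ => 1) ∧ E.r (emap e) = vmap (Λ.r e) ∧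
          E.s (emap e) = vmap (Λ.s e)) ∧
      (∀ n, 1 ≤ n → E.d (enew n) = (fun _ => 1) ∧
        E.r (enew n) = vnew (n - 1) ∧ E.s (enew n) = vnew n) ∧
      (∀ e e', IsOldEdge Λ T e₀ e → IsOldEdge Λ T e₀ e' → emap e = emap e' → e = e') ∧
      (∀ m n, 1 ≤ m → 1 ≤ n → enew m = enew n → m = n) ∧
      (∀ e, IsOldEdge Λ T e₀ e → ∀ n, 1 ≤ n → emap e ≠ enew n) ∧
      (∀ f, E.d f = (fun _ => 1) →
        (∃ e, IsOldEdge Λ T e₀ e ∧ f = emap e) ∨ (∃ n, 1 ≤ n ∧ f = enew n)) ∧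
      -- E is a row-finite source-free 1-graph
      E.RowFinite ∧ E.SourceFree ∧
      -- the action of G on E
      (∀ (g : G) (e : Λ.Path), IsOldEdge Λ T e₀ e →
        S'.act g (emap e) = emap (S.act g e) ∧ S'.res g (emap e) = S.res g e) ∧
      (∀ (g : G) (n : ℕ), 1 ≤ n →
        S'.act g (enew n) = enew n ∧ S'.res g (enew n) = g) ∧
      (∀ (g : G) (w : E.Path), E.IsVertex w → S'.act g w = w) ∧
      -- (G, E) is pseudo free
      S'.PseudoFree := by
  classical
  refine ⟨fun g => ExtAux.act_e₀ hfix he₀ huniq g,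
    ExtAux.extGraph Λ T e₀ v₀ hT hv₀,
    ExtAux.extSys Λ T e₀ v₀ S hfix he₀ huniq hT hv₀,
    ExtAux.vmapE Λ T e₀ v₀ hv₀, ExtAux.vnewE Λ T e₀ v₀ hv₀,
    ExtAux.emapE Λ T e₀ v₀ hv₀, ExtAux.enewE Λ T e₀ v₀ hv₀,
    ?_, ?_, ExtAux.vnewE_zero hv₀, ?_, ?_, ?_, ?_, ?_, ?_, ?_, ?_, ?_, ?_,
    ExtAux.extGraph_rowFinite hRF hT hv₀,
    ExtAux.extGraph_sourceFree hT hv₀ he₀.1,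
    ?_, ?_, ?_,
    ExtAux.extSys_pseudoFree Λ T e₀ v₀ S hfix he₀ huniq hT hv₀ hPF⟩
  -- vertices vmap v
  · intro v hv
    unfold KGraph.IsVertex
    rw [ExtAux.vmapE_mem hv₀ hv]
    rfl
  -- vertices vnew n
  · intro n
    unfold KGraph.IsVertex
    rcases Nat.eq_zero_or_pos n with rfl | hn
    · rw [ExtAux.vnewE_zero hv₀, ExtAux.vmapE_mem hv₀ hv₀]; rfl
    · rw [ExtAux.vnewE_pos hv₀ hn]; rfl
  -- vmap injective
  · intro v hv w hw h
    rw [ExtAux.vmapE_mem hv₀ hv, ExtAux.vmapE_mem hv₀ hw] at h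
    exact Sum.inl.inj (congrArg (fun x => x.1.1) h)
  -- vnew injective
  · intro m n hm hn h
    rw [ExtAux.vnewE_pos hv₀ hm, ExtAux.vnewE_pos hv₀ hn] at h
    exact Sum.inr.inj (congrArg (fun x => x.1.1) h)
  -- vmap ≠ vnew
  · intro v hv n hn h
    rw [ExtAux.vmapE_mem hv₀ hv, ExtAux.vnewE_pos hv₀ hn] at h
    exact absurd (congrArg (fun x => x.1.1) h) (by simp)
  -- vertices exhaust
  · intro w hw
    obtain ⟨⟨x, L⟩, hwf⟩ := w
    obtain rfl : L = [] := List.length_eq_zero_iff.mp (congrFun hw 0)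
    cases x with
    | inl u =>
        refine Or.inl ⟨u, hwf.1, ?_⟩
        rw [ExtAux.vmapE_mem hv₀ hwf.1]
    | inr n =>
        refine Or.inr ⟨n, hwf.1, ?_⟩
        rw [ExtAux.vnewE_pos hv₀ hwf.1]
  -- old edges d r s
  · intro e he
    have hrT : Λ.r e ∈ T :=
      hT.backward_closed _ (Λ.d_r e) _ he.2.1 ⟨e, rfl, rfl⟩
    rw [ExtAux.emapE_old hv₀ he, ExtAux.vmapE_mem hv₀ hrT,
      ExtAux.vmapE_mem hv₀ he.2.1]
    exact ⟨rfl, rfl, rfl⟩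
  -- new edges d r s
  · intro n hn
    rw [ExtAux.enewE_pos hv₀ hn]
    refine ⟨rfl, ?_, ?_⟩
    · by_cases h1 : n = 1
      · subst h1
        rw [show ExtAux.vnewE Λ T e₀ v₀ hv₀ (1 - 1) =
            ⟨(.inl v₀, []), hv₀, trivial⟩ from dif_neg (by omega)]
        refine ExtAux.epath_ext ?_ rfl
        show ExtAux.rng Λ v₀ (.inr 1) = Sum.inl v₀
        show (if 1 ≤ 1 then (Sum.inl v₀ : ExtAux.Ed Λ) else Sum.inr (1 - 1)) = _
        rw [if_pos le_rfl]
      · rw [ExtAux.vnewE_pos hv₀ (show 1 ≤ n - 1 by omega)]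
        refine ExtAux.epath_ext ?_ rfl
        show ExtAux.rng Λ v₀ (.inr n) = Sum.inr (n - 1)
        show (if n ≤ 1 then (Sum.inl v₀ : ExtAux.Ed Λ) else Sum.inr (n - 1)) = _
        rw [if_neg (by omega)]
    · rw [ExtAux.vnewE_pos hv₀ hn]
      rfl
  -- emap injective
  · intro e e' he he' h
    rw [ExtAux.emapE_old hv₀ he, ExtAux.emapE_old hv₀ he'] at h
    simpa using congrArg (fun x => x.1.2) h
  -- enew injective
  · intro m n hm hn h
    rw [ExtAux.enewE_pos hv₀ hm, ExtAux.enewE_pos hv₀ hn] at h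
    simpa using congrArg (fun x => x.1.1) h
  -- emap ≠ enew
  · intro e he n hn h
    rw [ExtAux.emapE_old hv₀ he, ExtAux.enewE_pos hv₀ hn] at h
    exact absurd (congrArg (fun x => x.1.1) h) (by simp)
  -- edges exhaust
  · intro f hf
    obtain ⟨⟨x, L⟩, hwf⟩ := f
    obtain ⟨e, rfl⟩ := List.length_eq_one_iff.mp (congrFun hf 0)
    cases e with
    | inl a =>
        refine Or.inl ⟨a, hwf.2.1, ?_⟩
        rw [ExtAux.emapE_old hv₀ hwf.2.1]
        exact ExtAux.epath_ext hwf.2.2.1.symm rfl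
    | inr n =>
        refine Or.inr ⟨n, hwf.2.1, ?_⟩
        rw [ExtAux.enewE_pos hv₀ hwf.2.1]
        exact ExtAux.epath_ext hwf.2.2.1.symm rfl
  -- action on old edges
  · intro g e he
    rw [ExtAux.emapE_old hv₀ he,
      ExtAux.emapE_old hv₀ (ExtAux.isOldEdge_act hfix he₀ huniq he g)]
    constructor
    · refine ExtAux.epath_ext ?_ rfl
      show Sum.inl (Λ.s e) = Sum.inl (Λ.s (S.act g e))
      rw [S.s_act, hfix g _ (Λ.d_s e)]
    · rfl
  -- action on new edges
  · intro g n hn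
    rw [ExtAux.enewE_pos hv₀ hn]
    exact ⟨rfl, rfl⟩
  -- action on vertices
  · intro g w hw
    obtain ⟨⟨x, L⟩, hwf⟩ := w
    obtain rfl : L = [] := List.length_eq_zero_iff.mp (congrFun hw 0)
    rfl
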